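/- If s and t are natural numbers with s dividing t, then every left Leibniz-derivation of order s+1 of an algebra A is a left Leibniz-derivation of order t+1 of A. -/

import Mathlib

/-- Left-normed product `((...(x₁x₂)...)x_{n-1})x_n` (junk value `0` for `n = 0`). -/
def lnProd {A : Type*} [Mul A] [Zero A] : ∀ {n : ℕ}, (Fin n → A) → A
  | 0, _ => 0
  | _ + 1, x => (List.ofFn fun i => x i.succ).foldl (· * ·) (x 0)

/-- `d` is a left Leibniz-derivation of order `n`. -/
def IsLeftLeibnizDer (F : Type*) {A : Type*} [Field F] [NonUnitalNonAssocRing A]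
    [Module F A] (n : ℕ) (d : A →ₗ[F] A) : Prop :=
  ∀ x : Fin n → A, d (lnProd x) = ∑ i, lnProd (Function.update x i (d (x i)))

/-- Arrangements of brackets on a product of `n` factors. -/
inductive BTree : ℕ → Type
  | leaf : BTree 1
  | node : ∀ {m k : ℕ}, BTree m → BTree k → BTree (m + k)

/-- The product of `x 0, ..., x (n-1)` with the arrangement of brackets `t`. -/
def BTree.eval {A : Type*} [Mul A] : ∀ {n : ℕ}, BTree n → (Fin n → A) → A
  | _, .leaf, x => x 0
  | _, .node (m := m) (k := k) t u, x =>
      (BTree.eval t fun i => x (Fin.castAdd k i)) * (BTree.eval u fun j => x (Fin.natAdd m j))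

/-- `d` is an `f`-Leibniz-derivation for the arrangement of brackets `t`. -/
def IsLeibnizDerWrt (F : Type*) {A : Type*} [Field F] [NonUnitalNonAssocRing A]
    [Module F A] {n : ℕ} (t : BTree n) (d : A →ₗ[F] A) : Prop :=
  ∀ x : Fin n → A, d (t.eval x) = ∑ i, t.eval (Function.update x i (d (x i)))

/-- The product of two submodules of a (nonassociative, nonunital) algebra:
the span of all products `s * t`, `s ∈ S`, `t ∈ T`. -/
def subMul (F : Type*) {A : Type*} [Field F] [NonUnitalNonAssocRing A] [Module F A]
    (S T : Submodule F A) : Submodule F A :=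
  Submodule.span F {z | ∃ s ∈ S, ∃ t ∈ T, z = s * t}

/-- `algPow F S k` is the power `S^(k+1)`, where `S^1 = S` and
`S^n = Σ_{i=1}^{n-1} S^i S^(n-i)`. -/
def algPow (F : Type*) {A : Type*} [Field F] [NonUnitalNonAssocRing A] [Module F A]
    (S : Submodule F A) : ℕ → Submodule F A
  | 0 => S
  | n + 1 => ⨆ i : Fin (n + 1), subMul F (algPow F S i) (algPow F S (n - (i : ℕ)))
  termination_by k => k
  decreasing_by all_goals omega

/-- `rpow F S k` is the right power `S^<k+1>`: `S^<1> = S`, `S^<n> = S^<n-1> S`. -/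
def rpow (F : Type*) {A : Type*} [Field F] [NonUnitalNonAssocRing A] [Module F A]
    (S : Submodule F A) : ℕ → Submodule F A
  | 0 => S
  | n + 1 => subMul F (rpow F S n) S

section aux
variable {A : Type*} [NonUnitalNonAssocRing A]

lemma foldl_mul_add (a b : A) (l : List A) :
    l.foldl (· * ·) (a + b) = l.foldl (· * ·) a + l.foldl (· * ·) b := by
  induction l generalizing a b with
  | nil => rfl
  | cons c l ih => simpa [List.foldl_cons, add_mul] using ih (a * c) (b * c)

lemma foldl_mul_sum {ι : Type*} (s : Finset ι) (f : ι → A) (l : List A) :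
    l.foldl (· * ·) (∑ i ∈ s, f i) = ∑ i ∈ s, l.foldl (· * ·) (f i) := by
  induction l generalizing f with
  | nil => rfl
  | cons c l ih => simp only [List.foldl_cons, Finset.sum_mul]; exact ih _

lemma lnProd_succ {n : ℕ} (x : Fin (n + 1) → A) :
    lnProd x = (List.ofFn fun i : Fin n => x i.succ).foldl (· * ·) (x 0) := rfl

lemma lnProd_cons {n : ℕ} (c : A) (b : Fin n → A) :
    lnProd (Fin.cons c b : Fin (n + 1) → A) = (List.ofFn b).foldl (· * ·) c := by
  simp [lnProd_succ]

lemma lnProd_split {m s : ℕ} (x : Fin (m + s + 1) → A) :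
    lnProd x = (List.ofFn fun j : Fin s => x ⟨m + 1 + j, by omega⟩).foldl (· * ·)
      (lnProd fun i : Fin (m + 1) => x (Fin.castLE (by omega) i)) := by
  rw [lnProd_succ, lnProd_succ, List.ofFn_add (f := fun i : Fin (m + s) => x i.succ),
    List.foldl_append]
  have h1 : (List.ofFn fun j : Fin s => x ((Fin.natAdd m j).succ)) =
      List.ofFn fun j : Fin s => x ⟨m + 1 + j, by omega⟩ := by
    refine congrArg _ (funext fun j => congrArg x ?_)
    ext; simp; omega
  have h2 : (List.ofFn fun i : Fin m => x ((Fin.castLE (Nat.le_add_right m s) i).succ)) =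
      List.ofFn fun i : Fin m => x ((Fin.castLE (show m + 1 ≤ m + s + 1 by omega) i.succ)) := by
    refine congrArg _ (funext fun i => congrArg x ?_)
    ext; simp
  have h3 : x 0 = x (Fin.castLE (show m + 1 ≤ m + s + 1 by omega) 0) := by
    refine congrArg x ?_; ext; simp
  rw [h1, h2, h3]

lemma sum_split {M : Type*} [AddCommMonoid M] {m s : ℕ} (g : Fin (m + s + 1) → M) :
    ∑ i, g i = (∑ i : Fin (m + 1), g (Fin.castLE (by omega) i)) +
      ∑ j : Fin s, g ⟨m + 1 + j, by omega⟩ := by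
  rw [Fintype.sum_equiv (finCongr (show m + s + 1 = m + 1 + s by omega)) g
    (fun i : Fin (m + 1 + s) => g (Fin.cast (by omega) i)) (fun i => rfl), Fin.sum_univ_add]
  congr 1

end aux

section main
variable {F A : Type*} [Field F] [NonUnitalNonAssocRing A] [Module F A]

lemma order_one (d : A →ₗ[F] A) : IsLeftLeibnizDer F 1 d := by
  intro x
  simp [lnProd_succ, Fin.sum_univ_succ]

lemma step {s : ℕ} {d : A →ₗ[F] A} (hd : IsLeftLeibnizDer F (s + 1) d)
    {m : ℕ} (hm : IsLeftLeibnizDer F (m + 1) d) :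
    IsLeftLeibnizDer F (m + s + 1) d := by
  intro x
  set a : Fin (m + 1) → A := fun i => x (Fin.castLE (by omega) i) with ha
  set b : Fin s → A := fun j => x ⟨m + 1 + j, by omega⟩ with hb
  have h1 : lnProd x = lnProd (Fin.cons (lnProd a) b) := by
    rw [lnProd_split, lnProd_cons]
  rw [h1, hd, Fin.sum_univ_succ, sum_split
    (fun i => lnProd (Function.update x i (d (x i))))]
  congr 1
  · -- head term
    rw [Fin.cons_zero, Fin.update_cons_zero, lnProd_cons, hm, foldl_mul_sum]
    refine Finset.sum_congr rfl fun i _ => ?_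
    rw [lnProd_split]
    have hlist : (List.ofFn fun j : Fin s =>
        Function.update x (Fin.castLE (by omega) i) (d (x (Fin.castLE (by omega) i)))
          ⟨m + 1 + j, by omega⟩) = List.ofFn b := by
      refine congrArg _ (funext fun j => ?_)
      rw [Function.update_of_ne (by simp [Fin.ext_iff]; omega)]
    have hfun : (fun i₂ : Fin (m + 1) =>
        Function.update x (Fin.castLE (by omega) i) (d (x (Fin.castLE (by omega) i)))
          (Fin.castLE (by omega) i₂)) = Function.update a i (d (a i)) := by
      exact Function.update_comp_eq_of_injective' x (Fin.castLE_injective _) i _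
    rw [hlist, hfun]
  · -- tail terms
    refine Finset.sum_congr rfl fun j _ => ?_
    rw [Fin.cons_succ, ← Fin.cons_update, lnProd_cons, lnProd_split]
    have hfun : (fun i : Fin (m + 1) =>
        Function.update x ⟨m + 1 + j, by omega⟩ (d (x ⟨m + 1 + j, by omega⟩))
          (Fin.castLE (by omega) i)) = a := by
      refine funext fun i => ?_
      rw [Function.update_of_ne (by simp [Fin.ext_iff]; omega)]
    have hlist : (List.ofFn fun j₂ : Fin s =>
        Function.update x ⟨m + 1 + j, by omega⟩ (d (x ⟨m + 1 + j, by omega⟩))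
          ⟨m + 1 + j₂, by omega⟩) = List.ofFn (Function.update b j (d (b j))) := by
      refine congrArg _ (funext fun j₂ => ?_)
      rcases eq_or_ne j₂ j with rfl | h
      · rw [Function.update_self, Function.update_self]
      · rw [Function.update_of_ne (by simp [Fin.ext_iff]; omega),
          Function.update_of_ne h]
    rw [hfun, hlist]

end main

/-- if `s ∣ t` then every left Leibniz-derivation of order `s+1` is
a left Leibniz-derivation of order `t+1`. -/
theorem stmt7 {F A : Type*} [Field F] [NonUnitalNonAssocRing A] [Module F A]
    {s t : ℕ} (hst : s ∣ t) (d : A →ₗ[F] A)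
    (hd : IsLeftLeibnizDer F (s + 1) d) :
    IsLeftLeibnizDer F (t + 1) d := by
  obtain ⟨k, rfl⟩ := hst
  induction k with
  | zero => simpa using order_one d
  | succ k ih =>
    have := step hd (m := s * k) ih
    rwa [show s * k + s + 1 = s * (k + 1) + 1 by ring] at this
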